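/- Let h ∈ S^δ[α] with δ ≥ 0 and 0 ≤ α < 1, i.e., h(z) = z + Σ_{n≥2} aₙ zⁿ with Σ_{n≥2} n^δ ((n-α)/(1-α)) |aₙ| ≤ 1. Then for z = re^{iθ} ∈ 𝔻: 1 - (1-α)r/((2-α)2^{δ-1}) ≤ |h'(z)| ≤ 1 + (1-α)r/((2-α)2^{δ-1}). -/

import Mathlib

open Complex Metric

set_option maxHeartbeats 1000000 in
theorem deriv_distortion
    (α δ : ℝ) (hα0 : 0 ≤ α) (hα1 : α < 1) (hδ : 0 ≤ δ)
    (h : ℂ → ℂ) (a : ℕ → ℂ) (ha0 : a 0 = 0) (ha1 : a 1 = 1)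
    (hrep : ∀ z ∈ ball (0 : ℂ) 1, HasSum (fun n : ℕ => a n * z ^ n) (h z))
    (hsb : Summable fun n : ℕ =>
      ((n : ℝ) + 2) ^ δ * (((n : ℝ) + 2 - α) / (1 - α)) * ‖a (n + 2)‖)
    (hcoef : ∑' n : ℕ,
      ((n : ℝ) + 2) ^ δ * (((n : ℝ) + 2 - α) / (1 - α)) * ‖a (n + 2)‖ ≤ 1) :
    ∀ z ∈ ball (0 : ℂ) 1,
      1 - (1 - α) * ‖z‖ / ((2 - α) * (2 : ℝ) ^ (δ - 1)) ≤ ‖deriv h z‖ ∧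
      ‖deriv h z‖ ≤ 1 + (1 - α) * ‖z‖ / ((2 - α) * (2 : ℝ) ^ (δ - 1)) := by
  have hα : (0:ℝ) < 1 - α := by linarith
  have h2α : (0:ℝ) < 2 - α := by linarith
  have h2δ : (0:ℝ) < (2:ℝ) ^ (δ - 1) := Real.rpow_pos_of_pos two_pos _
  set C : ℝ := (1 - α) / ((2 - α) * (2:ℝ) ^ (δ - 1)) with hCdef
  have hC0 : 0 ≤ C := by positivity
  have hXpos : (0:ℝ) < (2 - α) * (2:ℝ) ^ (δ - 1) := by positivity
  -- termwise coefficient bound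
  have hterm : ∀ n : ℕ, ((n:ℝ) + 2) * ‖a (n+2)‖ ≤
      C * (((n:ℝ)+2) ^ δ * (((n:ℝ)+2-α)/(1-α)) * ‖a (n+2)‖) := by
    intro n
    have hm2 : (2:ℝ) ≤ (n:ℝ) + 2 := by
      have := Nat.cast_nonneg (α := ℝ) n; linarith
    have hm0 : (0:ℝ) < (n:ℝ) + 2 := by linarith
    set m : ℝ := (n:ℝ) + 2 with hm
    have hkey : m ≤ C * (m ^ δ * ((m-α)/(1-α))) := by
      have hmδ : (0:ℝ) ≤ m ^ δ := (Real.rpow_pos_of_pos hm0 δ).le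
      have e1 : m ^ ((1:ℝ)-δ) * m ^ δ = m := by
        rw [← Real.rpow_add hm0, sub_add_cancel, Real.rpow_one]
      have e2 : m ^ ((1:ℝ)-δ) ≤ 2 ^ ((1:ℝ)-δ) * (m/2) := by
        have hsplit : m ^ ((1:ℝ)-δ) = 2 ^ ((1:ℝ)-δ) * (m/2) ^ ((1:ℝ)-δ) := by
          rw [← Real.mul_rpow (by norm_num) (by positivity)]
          congr 1
          ring
        have hx1 : (1:ℝ) ≤ m/2 := by linarith
        have h3 : (m/2) ^ ((1:ℝ)-δ) ≤ (m/2) ^ (1:ℝ) :=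
          Real.rpow_le_rpow_of_exponent_le hx1 (by linarith)
        rw [Real.rpow_one] at h3
        have h2p : (0:ℝ) < (2:ℝ) ^ ((1:ℝ)-δ) := Real.rpow_pos_of_pos two_pos _
        rw [hsplit]
        nlinarith
      have e3 : (m/2) * (2 - α) ≤ m - α := by nlinarith
      have e4 : (2:ℝ) ^ ((1:ℝ)-δ) * 2 ^ (δ-1) = 1 := by
        rw [← Real.rpow_add two_pos]; norm_num
      have h2p : (0:ℝ) < (2:ℝ) ^ ((1:ℝ)-δ) := Real.rpow_pos_of_pos two_pos _
      have main : m * ((2-α) * 2 ^ (δ-1)) ≤ m ^ δ * (m-α) := by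
        calc m * ((2-α) * 2 ^ (δ-1)) = m ^ ((1:ℝ)-δ) * m ^ δ * ((2-α) * 2 ^ (δ-1)) := by
              rw [e1]
          _ ≤ (2 ^ ((1:ℝ)-δ) * (m/2)) * m ^ δ * ((2-α) * 2 ^ (δ-1)) := by
              have : (0:ℝ) ≤ m ^ δ * ((2-α) * 2 ^ (δ-1)) := by positivity
              nlinarith
          _ = ((m/2) * (2-α)) * ((2 ^ ((1:ℝ)-δ)) * 2 ^ (δ-1)) * m ^ δ := by ring
          _ = ((m/2) * (2-α)) * m ^ δ := by rw [e4]; ring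
          _ ≤ (m - α) * m ^ δ := mul_le_mul_of_nonneg_right e3 hmδ
          _ = m ^ δ * (m - α) := by ring
      have hEq : C * (m ^ δ * ((m-α)/(1-α))) = m ^ δ * (m-α) / ((2-α) * 2 ^ (δ-1)) := by
        rw [hCdef]; field_simp
      rw [hEq, le_div_iff₀ hXpos]
      exact main
    calc m * ‖a (n+2)‖ ≤ (C * (m ^ δ * ((m-α)/(1-α)))) * ‖a (n+2)‖ :=
          mul_le_mul_of_nonneg_right hkey (norm_nonneg _)
      _ = C * (m ^ δ * ((m-α)/(1-α)) * ‖a (n+2)‖) := by ring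
  -- summability and tsum bound for the shifted coefficients
  have hwnn : ∀ n : ℕ, (0:ℝ) ≤ ((n:ℝ)+2) ^ δ * (((n:ℝ)+2-α)/(1-α)) * ‖a (n+2)‖ := by
    intro n
    have hm0 : (0:ℝ) < (n:ℝ) + 2 := by positivity
    have : (0:ℝ) ≤ ((n:ℝ)+2-α) := by
      have := Nat.cast_nonneg (α := ℝ) n; linarith
    positivity
  have hsum2 : Summable (fun n : ℕ => ((n:ℝ)+2) * ‖a (n+2)‖) := by
    apply Summable.of_nonneg_of_le (fun n => by positivity) hterm (hsb.mul_left C)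
  have htsum2 : ∑' n : ℕ, ((n:ℝ)+2) * ‖a (n+2)‖ ≤ C := by
    calc ∑' n : ℕ, ((n:ℝ)+2) * ‖a (n+2)‖
        ≤ ∑' n : ℕ, C * (((n:ℝ)+2) ^ δ * (((n:ℝ)+2-α)/(1-α)) * ‖a (n+2)‖) :=
          Summable.tsum_le_tsum hterm hsum2 (hsb.mul_left C)
      _ = C * ∑' n : ℕ, ((n:ℝ)+2) ^ δ * (((n:ℝ)+2-α)/(1-α)) * ‖a (n+2)‖ := tsum_mul_left
      _ ≤ C * 1 := mul_le_mul_of_nonneg_left hcoef hC0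
      _ = C := mul_one C
  -- global derivative bound
  have hu : Summable (fun n : ℕ => (n:ℝ) * ‖a n‖) := by
    rw [← summable_nat_add_iff 2]
    exact hsum2.congr (fun n => by push_cast; ring)
  intro z hz
  have hz1 : ‖z‖ < 1 := by simpa [mem_ball, dist_eq_norm] using hz
  -- derivative of the sum
  have hg : ∀ (n : ℕ) (y : ℂ), y ∈ ball (0:ℂ) 1 →
      HasDerivAt (fun x => a n * x ^ n) (a n * ((n:ℂ) * y ^ (n-1))) y :=
    fun n y _ => (hasDerivAt_pow n y).const_mul (a n)
  have hg' : ∀ (n : ℕ) (y : ℂ), y ∈ ball (0:ℂ) 1 →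
      ‖a n * ((n:ℂ) * y ^ (n-1))‖ ≤ (n:ℝ) * ‖a n‖ := by
    intro n y hy
    have hy1 : ‖y‖ < 1 := by simpa [mem_ball, dist_eq_norm] using hy
    have : ‖y ^ (n-1)‖ ≤ 1 := by
      rw [norm_pow]
      exact pow_le_one₀ (norm_nonneg _) hy1.le
    calc ‖a n * ((n:ℂ) * y ^ (n-1))‖ = ‖a n‖ * ((n:ℝ) * ‖y ^ (n-1)‖) := by
          simp [norm_mul]
      _ ≤ ‖a n‖ * ((n:ℝ) * 1) := by
          apply mul_le_mul_of_nonneg_left _ (norm_nonneg _)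
          exact mul_le_mul_of_nonneg_left this (Nat.cast_nonneg n)
      _ = (n:ℝ) * ‖a n‖ := by ring
  have hg0 : Summable (fun n : ℕ => a n * (0:ℂ) ^ n) := by
    apply summable_zero.congr
    intro n
    cases n with
    | zero => simp [ha0]
    | succ k => simp
  have hD : HasDerivAt (fun w => ∑' n : ℕ, a n * w ^ n)
      (∑' n : ℕ, a n * ((n:ℂ) * z ^ (n-1))) z :=
    hasDerivAt_tsum_of_isPreconnected hu isOpen_ball
      (convex_ball (0:ℂ) 1).isPreconnected hg hg'
      (mem_ball_self one_pos) hg0 hz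
  have heq : h =ᶠ[nhds z] fun w => ∑' n : ℕ, a n * w ^ n :=
    Filter.eventually_of_mem (isOpen_ball.mem_nhds hz)
      (fun w hw => ((hrep w hw).tsum_eq).symm)
  have hderiv : deriv h z = ∑' n : ℕ, a n * ((n:ℂ) * z ^ (n-1)) := by
    rw [heq.deriv_eq]; exact hD.deriv
  -- split off the first two terms
  have hDs : Summable (fun n : ℕ => a n * ((n:ℂ) * z ^ (n-1))) :=
    Summable.of_norm_bounded hu (fun n => hg' n z hz)
  have hDs1 : Summable (fun n : ℕ => a (n+1) * ((((n+1:ℕ)):ℂ) * z ^ ((n+1)-1))) :=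
    (summable_nat_add_iff 1).2 hDs
  have hsplit : ∑' n : ℕ, a n * ((n:ℂ) * z ^ (n-1))
      = 1 + ∑' n : ℕ, a (n+2) * (((n:ℕ)+2:ℂ) * z ^ (n+1)) := by
    rw [Summable.tsum_eq_zero_add hDs]
    simp only [Nat.cast_zero, zero_mul, mul_zero, zero_add]
    rw [Summable.tsum_eq_zero_add hDs1]
    have hc : ∀ b : ℕ, a (b+1+1) * ((((b+1+1:ℕ)):ℂ) * z ^ ((b+1+1)-1))
        = a (b+2) * (((b:ℕ)+2:ℂ) * z ^ (b+1)) := by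
      intro b; push_cast; ring_nf
    rw [tsum_congr hc]
    simp [ha1]
  set T : ℂ := ∑' n : ℕ, a (n+2) * (((n:ℕ)+2:ℂ) * z ^ (n+1)) with hT
  -- bound on T
  have hbnd : ∀ n : ℕ, ‖a (n+2) * (((n:ℕ)+2:ℂ) * z ^ (n+1))‖
      ≤ (((n:ℝ)+2) * ‖a (n+2)‖) * ‖z‖ := by
    intro n
    have hzp : ‖z ^ (n+1)‖ ≤ ‖z‖ := by
      rw [norm_pow]
      calc ‖z‖ ^ (n+1) ≤ ‖z‖ ^ 1 :=
            pow_le_pow_of_le_one (norm_nonneg _) hz1.le (by omega)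
        _ = ‖z‖ := pow_one _
    have hcast : ‖(((n:ℕ)+2:ℂ))‖ = (n:ℝ) + 2 := by
      rw [show (((n:ℕ)+2:ℂ)) = (((n:ℝ) + 2 : ℝ) : ℂ) by push_cast; ring]
      rw [Complex.norm_real, Real.norm_eq_abs]
      exact abs_of_nonneg (by positivity)
    calc ‖a (n+2) * (((n:ℕ)+2:ℂ) * z ^ (n+1))‖
        = ‖a (n+2)‖ * (((n:ℝ)+2) * ‖z ^ (n+1)‖) := by
          rw [norm_mul, norm_mul, hcast]
      _ ≤ ‖a (n+2)‖ * (((n:ℝ)+2) * ‖z‖) := by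
          apply mul_le_mul_of_nonneg_left _ (norm_nonneg _)
          exact mul_le_mul_of_nonneg_left hzp (by positivity)
      _ = (((n:ℝ)+2) * ‖a (n+2)‖) * ‖z‖ := by ring
  have hTnorm : ‖T‖ ≤ ‖z‖ * C := by
    have hns : Summable (fun n : ℕ => (((n:ℝ)+2) * ‖a (n+2)‖) * ‖z‖) :=
      hsum2.mul_right ‖z‖
    calc ‖T‖ ≤ ∑' n : ℕ, (((n:ℝ)+2) * ‖a (n+2)‖) * ‖z‖ :=
          tsum_of_norm_bounded hns.hasSum hbnd
      _ = (∑' n : ℕ, ((n:ℝ)+2) * ‖a (n+2)‖) * ‖z‖ := tsum_mul_right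
      _ ≤ C * ‖z‖ := mul_le_mul_of_nonneg_right htsum2 (norm_nonneg _)
      _ = ‖z‖ * C := by ring
  have hDT : deriv h z = 1 + T := by rw [hderiv, hsplit]
  have habs : |‖deriv h z‖ - 1| ≤ ‖z‖ * C := by
    have h1 := abs_norm_sub_norm_le (deriv h z) 1
    rw [norm_one] at h1
    have h2 : deriv h z - 1 = T := by rw [hDT]; ring
    rw [h2] at h1
    exact h1.trans hTnorm
  rw [abs_le] at habs
  have hCeq : (1 - α) * ‖z‖ / ((2 - α) * (2:ℝ) ^ (δ - 1)) = ‖z‖ * C := by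
    rw [hCdef]; ring
  constructor
  · rw [hCeq]; linarith [habs.1]
  · rw [hCeq]; linarith [habs.2]
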